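/- For every finite set of exponents 0 = i_1 < i_2 < ... < i_r of natural numbers, there exist nonzero real coefficients a_{i_1}, ..., a_{i_r} such that the polynomial p(x) = a_{i_1}x^{i_1} + a_{i_2}x^{i_2} + ... + a_{i_r}x^{i_r} has exactly r - 1 distinct positive real roots. -/

import Mathlib

open Finset

/-- Factor out the lowest power from a sum of monomials (for the variable itself). -/
private lemma drs_sum_factor (r : ℕ) (e : ℕ → ℕ) (he0 : ∀ j, j < r → e 0 ≤ e j)
    (a : ℕ → ℝ) (x : ℝ) :
    ∑ j ∈ Finset.range r, a j * x ^ e j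
      = x ^ e 0 * ∑ j ∈ Finset.range r, a j * x ^ (e j - e 0) := by
  rw [Finset.mul_sum]
  refine Finset.sum_congr rfl fun j hj => ?_
  rw [Finset.mem_range] at hj
  have h := he0 j hj
  have hx : x ^ e j = x ^ e 0 * x ^ (e j - e 0) := by
    rw [← pow_add]
    congr 1
    omega
  rw [hx]
  ring

private lemma drs_hasDerivAt (r : ℕ) (e : ℕ → ℕ) (a : ℕ → ℝ) (x : ℝ) :
    HasDerivAt (fun y : ℝ => ∑ j ∈ Finset.range r, a j * y ^ e j)
      (∑ j ∈ Finset.range r, a j * ((e j : ℝ) * x ^ (e j - 1))) x := by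
  refine HasDerivAt.fun_sum fun j _ => ?_
  simpa using (hasDerivAt_pow (e j) x).const_mul (a j)

/-- Upper bound: a sum of `r` monomials with nonzero real coefficients has at most
`r - 1` distinct positive roots. -/
private lemma drs_upper : ∀ (r : ℕ), 1 ≤ r → ∀ (e : ℕ → ℕ),
    (∀ j k : ℕ, j < k → k < r → e j < e k) →
    ∀ (a : ℕ → ℝ), (∀ j, j < r → a j ≠ 0) →
    ∀ S : Finset ℝ, (∀ x ∈ S, 0 < x ∧ ∑ j ∈ Finset.range r, a j * x ^ e j = 0) →
    S.card ≤ r - 1 := by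
  intro r
  induction r with
  | zero => intro h; omega
  | succ r ih =>
    intro _ e he a ha S hS
    rcases Nat.eq_zero_or_pos r with hr0 | hr1
    · subst hr0
      simp only [Nat.sub_self, Nat.le_zero, Finset.card_eq_zero]
      rw [Finset.eq_empty_iff_forall_notMem]
      intro x hx
      obtain ⟨hxpos, hxroot⟩ := hS x hx
      rw [Finset.sum_range_one] at hxroot
      have := mul_ne_zero (ha 0 (by omega)) (pow_ne_zero (e 0) (ne_of_gt hxpos))
      exact this hxroot
    · -- r ≥ 1
      by_contra hcard
      push_neg at hcard
      set m := S.card with hm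
      have hm2 : r + 1 ≤ m := by omega
      -- sorted enumeration of S
      set σ := S.orderIsoOfFin (rfl : S.card = m) with hσ
      set w : ℕ → ℝ := fun k => if h : k < m then (σ ⟨k, h⟩ : ℝ) else 0 with hw
      have hwS : ∀ k, k < m → w k ∈ S := by
        intro k hk; simp only [hw, dif_pos hk]; exact (σ ⟨k, hk⟩).2
      have hwlt : ∀ j k, j < k → k < m → w j < w k := by
        intro j k hjk hk
        have hj : j < m := lt_trans hjk hk
        simp only [hw, dif_pos hj, dif_pos hk]
        have : (⟨j, hj⟩ : Fin m) < ⟨k, hk⟩ := by exact_mod_cast hjk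
        exact_mod_cast (σ.lt_iff_lt.mpr this)
      -- the quotient g
      set g : ℝ → ℝ := fun x => ∑ j ∈ Finset.range (r + 1), a j * x ^ (e j - e 0) with hg
      have he0 : ∀ j, j < r + 1 → e 0 ≤ e j := by
        intro j hj
        rcases Nat.eq_zero_or_pos j with h | h
        · subst h; exact le_rfl
        · exact le_of_lt (he 0 j h hj)
      have hgzero : ∀ x ∈ S, g x = 0 := by
        intro x hx
        obtain ⟨hxpos, hxroot⟩ := hS x hx
        rw [drs_sum_factor (r+1) e he0 a x] at hxroot
        have := pow_ne_zero (e 0) (ne_of_gt hxpos)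
        exact (mul_eq_zero.mp hxroot).resolve_left this
      -- derivative data
      set b : ℕ → ℝ := fun j => a (j + 1) * ((e (j + 1) - e 0 : ℕ) : ℝ) with hb
      set d : ℕ → ℕ := fun j => e (j + 1) - e 0 - 1 with hd
      have hgd : ∀ x : ℝ, HasDerivAt g (∑ j ∈ Finset.range r, b j * x ^ d j) x := by
        intro x
        have h1 := drs_hasDerivAt (r + 1) (fun j => e j - e 0) a x
        have h2 : (∑ j ∈ Finset.range (r+1), a j * (((e j - e 0 : ℕ) : ℝ) * x ^ (e j - e 0 - 1)))
            = ∑ j ∈ Finset.range r, b j * x ^ d j := by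
          rw [Finset.sum_range_succ']
          simp only [Nat.sub_self, Nat.cast_zero, zero_mul, mul_zero, add_zero]
          refine Finset.sum_congr rfl fun j hj => ?_
          simp only [hb, hd]; ring
        rw [← h2]; exact h1
      have hgcont : Continuous g := by
        refine continuous_finset_sum _ fun j _ => ?_
        exact continuous_const.mul (continuous_pow _)
      -- Rolle between consecutive roots
      have hroll : ∀ k, k + 1 < m → ∃ c, c ∈ Set.Ioo (w k) (w (k + 1)) ∧
          (∑ j ∈ Finset.range r, b j * c ^ d j) = 0 := by
        intro k hk
        have hlt : w k < w (k + 1) := hwlt k (k + 1) (by omega) hk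
        have heq : g (w k) = g (w (k + 1)) := by
          rw [hgzero _ (hwS k (by omega)), hgzero _ (hwS (k+1) hk)]
        obtain ⟨c, hc1, hc2⟩ := exists_hasDerivAt_eq_zero hlt hgcont.continuousOn heq
          (fun x _ => hgd x)
        exact ⟨c, hc1, hc2⟩
      choose c hc1 hc2 using hroll
      set c' : ℕ → ℝ := fun k => if h : k + 1 < m then c k h else 0 with hc'
      set T : Finset ℝ := (Finset.range (m - 1)).image c' with hT
      have hmemc : ∀ k, k < m - 1 → c' k ∈ Set.Ioo (w k) (w (k+1)) := by
        intro k hk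
        have h : k + 1 < m := by omega
        simp only [hc', dif_pos h]
        exact hc1 k h
      have hwmono : ∀ j k, j ≤ k → k < m → w j ≤ w k := by
        intro j k hjk hk
        rcases Nat.lt_or_ge j k with h | h
        · exact le_of_lt (hwlt j k h hk)
        · have : j = k := by omega
          rw [this]
      have hcmono : ∀ j k, j < k → k < m - 1 → c' j < c' k := by
        intro j k hjk hk
        have hj := hmemc j (by omega)
        have hk' := hmemc k hk
        calc c' j < w (j + 1) := hj.2
          _ ≤ w k := hwmono (j+1) k (by omega) (by omega)
          _ < c' k := hk'.1
      have hTcard : T.card = m - 1 := by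
        rw [hT, Finset.card_image_of_injOn, Finset.card_range]
        intro x hx y hy hxy
        simp only [Finset.coe_range, Set.mem_Iio] at hx hy
        rcases Nat.lt_trichotomy x y with h | h | h
        · exact absurd hxy (ne_of_lt (hcmono x y h hy))
        · exact h
        · exact absurd hxy.symm (ne_of_lt (hcmono y x h hx))
      have hd' : ∀ j k : ℕ, j < k → k < r → d j < d k := by
        intro j k hjk hk
        have h1 := he (j+1) (k+1) (by omega) (by omega)
        have h2 := he 0 (j+1) (by omega) (by omega)
        simp only [hd]; omega
      have hb' : ∀ j, j < r → b j ≠ 0 := by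
        intro j hj
        have h1 := ha (j+1) (by omega)
        have h2 := he 0 (j+1) (by omega) (by omega)
        refine mul_ne_zero h1 ?_
        exact_mod_cast Nat.cast_ne_zero.mpr (by omega : e (j+1) - e 0 ≠ 0)
      have hTroots : ∀ x ∈ T, 0 < x ∧ ∑ j ∈ Finset.range r, b j * x ^ d j = 0 := by
        intro x hx
        rw [hT, Finset.mem_image] at hx
        obtain ⟨k, hk, rfl⟩ := hx
        rw [Finset.mem_range] at hk
        have h : k + 1 < m := by omega
        have hmem := hmemc k hk
        have hw0 : 0 < w k := (hS _ (hwS k (by omega))).1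
        constructor
        · exact lt_trans hw0 hmem.1
        · simp only [hc', dif_pos h]; exact hc2 k h
      have := ih hr1 d hd' b hb' T hTroots
      omega

/-- Construction: one can choose nonzero coefficients and positive points so that the
sum of monomials alternates in sign at those points (ending positive at the top). -/
private lemma drs_construct : ∀ (r : ℕ), 1 ≤ r → ∀ (e : ℕ → ℕ),
    (∀ j k : ℕ, j < k → k < r → e j < e k) →
    ∃ a : ℕ → ℝ, (∀ j, j < r → a j ≠ 0) ∧
    ∃ t : ℕ → ℝ, (∀ j k, j < k → k < r → t j < t k) ∧ (∀ k, k < r → 0 < t k) ∧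
      (∀ k, k < r → 0 < (-1 : ℝ) ^ (r - 1 - k) * ∑ j ∈ Finset.range r, a j * (t k) ^ e j) := by
  intro r
  induction r with
  | zero => intro h; omega
  | succ r ih =>
    intro _ e he
    rcases Nat.eq_zero_or_pos r with hr0 | hr1
    · subst hr0
      refine ⟨fun _ => 1, fun j hj => one_ne_zero, fun _ => 1, ?_, fun k hk => one_pos, ?_⟩
      · intro j k hjk hk; omega
      · intro k hk
        have : k = 0 := by omega
        subst this
        simp
    · obtain ⟨a', ha', t', ht'mono, ht'pos, ht'sign⟩ := ih hr1 (fun j => e (j + 1))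
        (fun j k hjk hk => he (j+1) (k+1) (by omega) (by omega))
      set h : ℝ → ℝ := fun x => ∑ j ∈ Finset.range r, a' j * x ^ e (j + 1) with hh
      have hhne : ∀ k, k < r → h (t' k) ≠ 0 := by
        intro k hk hzero
        have := ht'sign k hk
        rw [hh] at hzero
        simp only [hzero, mul_zero, lt_self_iff_false] at this
      -- ε : small positive
      have hne : (Finset.range r).Nonempty := ⟨0, Finset.mem_range.mpr hr1⟩
      set img := (Finset.range r).image (fun k => |h (t' k)| / (t' k) ^ e 0) with himg
      have himgne : img.Nonempty := hne.image _
      set ε := img.min' himgne with hε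
      have hεpos : 0 < ε := by
        rw [hε]
        rw [Finset.lt_min'_iff]
        intro y hy
        rw [himg, Finset.mem_image] at hy
        obtain ⟨k, hk, rfl⟩ := hy
        rw [Finset.mem_range] at hk
        exact div_pos (abs_pos.mpr (hhne k hk)) (pow_pos (ht'pos k hk) _)
      have hεle : ∀ k, k < r → ε * (t' k) ^ e 0 ≤ |h (t' k)| := by
        intro k hk
        have hmem : |h (t' k)| / (t' k) ^ e 0 ∈ img := by
          rw [himg, Finset.mem_image]
          exact ⟨k, Finset.mem_range.mpr hk, rfl⟩
        have h1 := Finset.min'_le img _ hmem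
        have h2 : (0:ℝ) < (t' k) ^ e 0 := pow_pos (ht'pos k hk) _
        rw [← hε] at h1
        calc ε * (t' k) ^ e 0 ≤ (|h (t' k)| / (t' k) ^ e 0) * (t' k) ^ e 0 := by
              exact mul_le_mul_of_nonneg_right h1 (le_of_lt h2)
          _ = |h (t' k)| := div_mul_cancel₀ _ (ne_of_gt h2)
      -- the small lowest coefficient
      set a : ℕ → ℝ := fun j => if j = 0 then (-1 : ℝ) ^ r * (ε / 2) else a' (j - 1) with ha
      have hasp : ∀ j, a (j + 1) = a' j := by intro j; simp [ha]
      set A : ℝ := ∑ j ∈ Finset.range r, |a' j| with hA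
      have hAnn : 0 ≤ A := Finset.sum_nonneg fun j _ => abs_nonneg _
      -- choice of δ
      set δ : ℝ := min (min (1/2) (t' 0 / 2)) (ε / (4 * (A + 1))) with hδ
      have ht'0pos : 0 < t' 0 := ht'pos 0 hr1
      have hδpos : 0 < δ := by
        apply lt_min (lt_min (by norm_num) (by linarith))
        apply div_pos hεpos
        linarith
      have hδ1 : δ ≤ 1 := le_trans (min_le_left _ _) (le_trans (min_le_left _ _) (by norm_num))
      have hδt : δ < t' 0 := lt_of_le_of_lt (le_trans (min_le_left _ _) (min_le_right _ _)) (by linarith)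
      have hδε : δ * (A + 1) ≤ ε / 4 := by
        have h1 : δ ≤ ε / (4 * (A + 1)) := min_le_right _ _
        have h2 : (0:ℝ) < A + 1 := by linarith
        calc δ * (A + 1) ≤ (ε / (4 * (A + 1))) * (A + 1) := mul_le_mul_of_nonneg_right h1 (le_of_lt h2)
          _ = ε / 4 := by field_simp
      -- the points
      set t : ℕ → ℝ := fun k => if k = 0 then δ else t' (k - 1) with ht
      have htsp : ∀ k, t (k + 1) = t' k := by intro k; simp [ht]
      have ht0 : t 0 = δ := by simp [ht]
      refine ⟨a, ?_, t, ?_, ?_, ?_⟩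
      · intro j hj
        rcases Nat.eq_zero_or_pos j with h0 | h0
        · subst h0
          simp only [ha, if_pos rfl]
          refine mul_ne_zero (pow_ne_zero _ (by norm_num)) (by linarith)
        · obtain ⟨j', rfl⟩ : ∃ j', j = j' + 1 := ⟨j - 1, by omega⟩
          rw [hasp]
          exact ha' j' (by omega)
      · intro j k hjk hk
        rcases Nat.eq_zero_or_pos j with h0 | h0
        · subst h0
          obtain ⟨k', rfl⟩ : ∃ k', k = k' + 1 := ⟨k - 1, by omega⟩
          rw [ht0, htsp]
          calc δ < t' 0 := hδt
            _ ≤ t' k' := by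
              rcases Nat.eq_zero_or_pos k' with h | h
              · rw [h]
              · exact le_of_lt (ht'mono 0 k' h (by omega))
        · obtain ⟨j', rfl⟩ : ∃ j', j = j' + 1 := ⟨j - 1, by omega⟩
          obtain ⟨k', rfl⟩ : ∃ k', k = k' + 1 := ⟨k - 1, by omega⟩
          rw [htsp, htsp]
          exact ht'mono j' k' (by omega) (by omega)
      · intro k hk
        rcases Nat.eq_zero_or_pos k with h0 | h0
        · subst h0; rw [ht0]; exact hδpos
        · obtain ⟨k', rfl⟩ : ∃ k', k = k' + 1 := ⟨k - 1, by omega⟩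
          rw [htsp]
          exact ht'pos k' (by omega)
      · -- the sign conditions
        have hsum : ∀ x : ℝ, ∑ j ∈ Finset.range (r + 1), a j * x ^ e j
            = (-1 : ℝ) ^ r * (ε / 2) * x ^ e 0 + h x := by
          intro x
          rw [Finset.sum_range_succ']
          have h1 : ∑ j ∈ Finset.range r, a (j + 1) * x ^ e (j + 1) = h x :=
            Finset.sum_congr rfl fun j _ => by rw [hasp]
          have h2 : a 0 * x ^ e 0 = (-1 : ℝ) ^ r * (ε / 2) * x ^ e 0 := by
            simp [ha]
          rw [h1, h2, add_comm]
        intro k hk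
        rcases Nat.eq_zero_or_pos k with h0 | h0
        · -- new point δ
          subst h0
          rw [ht0, hsum]
          have hrw : r + 1 - 1 - 0 = r := by omega
          rw [hrw]
          have hpow : (0:ℝ) < δ ^ e 0 := pow_pos hδpos _
          have hexp : ∀ j, j < r → e 0 + 1 ≤ e (j + 1) := by
            intro j hj
            have := he 0 (j + 1) (by omega) (by omega)
            omega
          have hbound : |h δ| ≤ δ ^ e 0 * (δ * A) := by
            rw [hh]
            calc |∑ j ∈ Finset.range r, a' j * δ ^ e (j + 1)|
                ≤ ∑ j ∈ Finset.range r, |a' j * δ ^ e (j + 1)| := Finset.abs_sum_le_sum_abs _ _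
              _ ≤ ∑ j ∈ Finset.range r, |a' j| * (δ ^ e 0 * δ) := by
                  refine Finset.sum_le_sum fun j hj => ?_
                  rw [Finset.mem_range] at hj
                  rw [abs_mul, abs_pow, abs_of_pos hδpos]
                  refine mul_le_mul_of_nonneg_left ?_ (abs_nonneg _)
                  calc δ ^ e (j + 1) ≤ δ ^ (e 0 + 1) :=
                        pow_le_pow_of_le_one (le_of_lt hδpos) hδ1 (hexp j hj)
                    _ = δ ^ e 0 * δ := by rw [pow_succ]
              _ = δ ^ e 0 * (δ * A) := by rw [← Finset.sum_mul, hA]; ring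
          have hsq : ((-1:ℝ) ^ r) * ((-1:ℝ) ^ r) = 1 := by
            rw [← pow_add]
            exact Even.neg_one_pow ⟨r, by ring⟩
          have key : (-1:ℝ) ^ r * ((-1 : ℝ) ^ r * (ε / 2) * δ ^ e 0 + h δ)
              = ε / 2 * δ ^ e 0 + (-1:ℝ) ^ r * h δ := by
            have : (-1:ℝ) ^ r * ((-1 : ℝ) ^ r * (ε / 2) * δ ^ e 0)
                = (((-1:ℝ) ^ r) * ((-1:ℝ) ^ r)) * ((ε / 2) * δ ^ e 0) := by ring
            rw [mul_add, this, hsq]; ring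
          rw [key]
          have habs : |(-1:ℝ) ^ r * h δ| = |h δ| := by
            rw [abs_mul, abs_pow, abs_neg, abs_one, one_pow, one_mul]
          have h1 : -(δ ^ e 0 * (δ * A)) ≤ (-1:ℝ) ^ r * h δ := by
            have := neg_abs_le ((-1:ℝ) ^ r * h δ)
            rw [habs] at this
            linarith [hbound]
          have h2 : δ * A ≤ ε / 4 := by
            have : δ * A ≤ δ * (A + 1) := by nlinarith [hδpos]
            linarith [hδε]
          have h3 : δ ^ e 0 * (δ * A) ≤ δ ^ e 0 * (ε / 4) :=
            mul_le_mul_of_nonneg_left h2 (le_of_lt hpow)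
          nlinarith [hpow, hεpos]
        · -- old points
          obtain ⟨k', rfl⟩ : ∃ k', k = k' + 1 := ⟨k - 1, by omega⟩
          rw [htsp, hsum]
          have hrw : r + 1 - 1 - (k' + 1) = r - 1 - k' := by omega
          rw [hrw]
          have hk' : k' < r := by omega
          have hsgn := ht'sign k' hk'
          have hsumeq : (∑ j ∈ Finset.range r, a' j * (t' k') ^ e (j+1)) = h (t' k') := rfl
          rw [hsumeq] at hsgn
          -- |a 0 * x^e0| < |h x|
          have hxpos := ht'pos k' hk'
          have hsmall : ε / 2 * (t' k') ^ e 0 < |h (t' k')| := by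
            have := hεle k' hk'
            have hp : (0:ℝ) < (t' k') ^ e 0 := pow_pos hxpos _
            nlinarith [hεpos]
          set s : ℝ := (-1 : ℝ) ^ (r - 1 - k') with hs
          have hsabs : |s| = 1 := by rw [hs, abs_pow, abs_neg, abs_one, one_pow]
          have hsh : s * h (t' k') = |h (t' k')| := by
            have h1 : |s * h (t' k')| = |h (t' k')| := by rw [abs_mul, hsabs, one_mul]
            have h2 : 0 < s * h (t' k') := hsgn
            rw [← h1, abs_of_pos h2]
          have hterm : |s * ((-1 : ℝ) ^ r * (ε / 2) * (t' k') ^ e 0)|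
              = ε / 2 * (t' k') ^ e 0 := by
            rw [abs_mul, hsabs, one_mul, abs_mul, abs_mul, abs_pow, abs_neg, abs_one, one_pow,
              one_mul, abs_pow, abs_of_pos hxpos, abs_of_pos (by linarith : (0:ℝ) < ε / 2)]
          have h1 : -(ε / 2 * (t' k') ^ e 0) ≤ s * ((-1 : ℝ) ^ r * (ε / 2) * (t' k') ^ e 0) := by
            have := neg_abs_le (s * ((-1 : ℝ) ^ r * (ε / 2) * (t' k') ^ e 0))
            rw [hterm] at this
            exact this
          have : 0 < s * ((-1 : ℝ) ^ r * (ε / 2) * (t' k') ^ e 0) + s * h (t' k') := by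
            rw [hsh]; linarith
          calc (0:ℝ) < s * ((-1 : ℝ) ^ r * (ε / 2) * (t' k') ^ e 0) + s * h (t' k') := this
            _ = s * ((-1 : ℝ) ^ r * (ε / 2) * (t' k') ^ e 0 + h (t' k')) := by ring

theorem descartes_rule_of_signs_sharp
    (r : ℕ) (hr : 0 < r) (i : ℕ → ℕ)
    (hi0 : i 0 = 0)
    (hmono : ∀ j k : ℕ, j < k → k < r → i j < i k) :
    ∃ a : ℕ → ℝ, (∀ j : ℕ, j < r → a j ≠ 0) ∧
      ∃ S : Finset ℝ, S.card = r - 1 ∧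
        ∀ x : ℝ, x ∈ S ↔ (0 < x ∧ ∑ j ∈ Finset.range r, a j * x ^ (i j) = 0) := by
  obtain ⟨a, ha, t, htmono, htpos, htsign⟩ := drs_construct r hr i hmono
  set f : ℝ → ℝ := fun x => ∑ j ∈ Finset.range r, a j * x ^ i j with hf
  have hfcont : Continuous f := by
    refine continuous_finset_sum _ fun j _ => ?_
    exact continuous_const.mul (continuous_pow _)
  -- IVT roots between consecutive sign changes
  have hivt : ∀ k, k + 1 < r → ∃ x ∈ Set.Ioo (t k) (t (k + 1)), f x = 0 := by
    intro k hk
    have h1 := htsign k (by omega)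
    have h2 := htsign (k + 1) hk
    have hexp : r - 1 - k = (r - 1 - (k + 1)) + 1 := by omega
    set s : ℝ := (-1 : ℝ) ^ (r - 1 - (k + 1)) with hs
    have hflip : (-1 : ℝ) ^ (r - 1 - k) = -s := by
      rw [hexp, pow_succ]; ring
    rw [hflip] at h1
    have htlt : t k < t (k + 1) := htmono k (k + 1) (by omega) hk
    rcases Nat.even_or_odd (r - 1 - (k + 1)) with hev | hod
    · have hseq : s = 1 := hev.neg_one_pow
      rw [hseq] at h1 h2
      simp only [neg_mul, one_mul, neg_neg] at h1 h2
      -- h1 : 0 < - f (t k)  → f (t k) < 0 ; h2 : 0 < f (t (k+1))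
      have hfk : f (t k) < 0 := by nlinarith [h1]
      have hfk1 : 0 < f (t (k + 1)) := h2
      have := intermediate_value_Ioo (le_of_lt htlt) hfcont.continuousOn
        (Set.mem_Ioo.mpr ⟨hfk, hfk1⟩)
      obtain ⟨x, hx1, hx2⟩ := this
      exact ⟨x, hx1, hx2⟩
    · have hseq : s = -1 := hod.neg_one_pow
      rw [hseq] at h1 h2
      have hfk : 0 < f (t k) := by nlinarith [h1]
      have hfk1 : f (t (k + 1)) < 0 := by nlinarith [h2]
      have := intermediate_value_Ioo' (le_of_lt htlt) hfcont.continuousOn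
        (Set.mem_Ioo.mpr ⟨hfk1, hfk⟩)
      obtain ⟨x, hx1, hx2⟩ := this
      exact ⟨x, hx1, hx2⟩
  choose x hx1 hx2 using hivt
  set x' : ℕ → ℝ := fun k => if h : k + 1 < r then x k h else 0 with hx'
  have hx'mem : ∀ k, k + 1 < r → x' k ∈ Set.Ioo (t k) (t (k + 1)) := by
    intro k hk; simp only [hx', dif_pos hk]; exact hx1 k hk
  have hx'root : ∀ k, k + 1 < r → f (x' k) = 0 := by
    intro k hk; simp only [hx', dif_pos hk]; exact hx2 k hk
  set R : Finset ℝ := (Finset.range (r - 1)).image x' with hR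
  have hx'mono : ∀ j k, j < k → k + 1 < r → x' j < x' k := by
    intro j k hjk hk
    have hj := hx'mem j (by omega)
    have hk' := hx'mem k hk
    calc x' j < t (j + 1) := hj.2
      _ ≤ t k := by
        rcases Nat.lt_or_ge (j + 1) k with h | h
        · exact le_of_lt (htmono (j + 1) k h (by omega))
        · have : j + 1 = k := by omega
          rw [this]
      _ < x' k := hk'.1
  have hRcard : R.card = r - 1 := by
    rw [hR, Finset.card_image_of_injOn, Finset.card_range]
    intro u hu v hv huv
    simp only [Finset.coe_range, Set.mem_Iio] at hu hv
    rcases Nat.lt_trichotomy u v with h | h | h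
    · exact absurd huv (ne_of_lt (hx'mono u v h (by omega)))
    · exact h
    · exact absurd huv.symm (ne_of_lt (hx'mono v u h (by omega)))
  -- the set of all positive roots is finite
  set Z : Set ℝ := {y | 0 < y ∧ ∑ j ∈ Finset.range r, a j * y ^ i j = 0} with hZ
  have hZfin : Z.Finite := by
    rw [← Set.not_infinite]
    intro hinf
    obtain ⟨F, hFsub, hFcard⟩ := hinf.exists_subset_card_eq r
    have := drs_upper r hr i hmono a ha F (fun y hy => hFsub hy)
    omega
  refine ⟨a, ha, hZfin.toFinset, ?_, ?_⟩
  · -- cardinality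
    have hle : hZfin.toFinset.card ≤ r - 1 := by
      refine drs_upper r hr i hmono a ha _ ?_
      intro y hy
      rw [Set.Finite.mem_toFinset] at hy
      exact hy
    have hge : r - 1 ≤ hZfin.toFinset.card := by
      rw [← hRcard]
      apply Finset.card_le_card
      intro y hy
      rw [Set.Finite.mem_toFinset]
      rw [hR, Finset.mem_image] at hy
      obtain ⟨k, hk, rfl⟩ := hy
      rw [Finset.mem_range] at hk
      have hkr : k + 1 < r := by omega
      have hmem := hx'mem k hkr
      have ht0 : 0 < t k := htpos k (by omega)
      exact ⟨lt_trans ht0 hmem.1, hx'root k hkr⟩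
    omega
  · intro y
    rw [Set.Finite.mem_toFinset]
    exact Iff.rfl
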